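/- Fix an epoch of the MWU-with-focus algorithm, with first iteration t₀ and last iteration t₁. For any intermediate iteration t₀ < t < t₁, the step size δ chosen so that ‖Ag^(t)‖_∞ = ε with g^(t) ≤ δ x^(t) satisfies δ > ε/η, where η = ln(m)/ε is the termination threshold on ‖Ax^(t)‖_∞. Consequently, since each active coordinate j grows multiplicatively by factor at least (1+ε/η) per iteration, from initial value at least ε/(|B| max_i A_{i,j}) to at most η/max_i A_{i,j}, the number of iterations in the epoch is at most O(log(m) · log(η|B|/ε) / ε²). -/

import Mathlib

/-- For `0 ≤ r ≤ 1`, `r/2 ≤ log(1+r)`. -/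
lemma half_le_log_one_add {r : ℝ} (h0 : 0 ≤ r) (h1 : r ≤ 1) :
    r / 2 ≤ Real.log (1 + r) := by
  have hpos : (0:ℝ) < 1 + r := by linarith
  have h := Real.log_le_sub_one_of_pos (x := 1 / (1 + r)) (by positivity)
  rw [Real.log_div one_ne_zero (ne_of_gt hpos), Real.log_one] at h
  have : r / (1 + r) ≤ Real.log (1 + r) := by
    have h' : 1 / (1 + r) - 1 = -(r / (1 + r)) := by
      field_simp
      ring
    rw [h'] at h
    linarith
  refine le_trans ?_ this
  rw [div_le_div_iff₀ (by norm_num) hpos]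
  nlinarith

/-- Within an epoch of the MWU-with-focus algorithm (with `η = ln(m)/ε`):
(1) the step size `δ` with `‖A g‖_∞ = ε` and `g ≤ δ x` satisfies `δ > ε/η` whenever
    `‖A x‖_∞ < η`;
(2) consequently, since each active coordinate grows by a factor at least `1 + ε/η` per
    iteration, from initial value at least `ε/(|B|·max_i A_{i,j})` to final value at most
    `η/max_i A_{i,j}`, the number of iterations in the epoch is at most
    `O(log(m)·log(η|B|/ε)/ε²)`. -/
theorem mwu_epoch_iterations (m N : ℕ) (hm : 2 ≤ m) (ε : ℝ) (hε : 0 < ε) (hε2 : ε ≤ 1 / 2)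
    (A : Matrix (Fin m) (Fin N) ℝ) (hA : ∀ i j, 0 ≤ A i j) :
    (∀ (x g : Fin N → ℝ) (δ : ℝ),
      (∀ j, 0 ≤ x j) → (∀ j, 0 ≤ g j) → (∀ j, g j ≤ δ * x j) →
      (∃ i, A.mulVec g i = ε) →
      (∀ i, A.mulVec x i < Real.log m / ε) →
      ε / (Real.log m / ε) < δ) ∧
    (∀ (y : ℕ → ℝ) (t₀ t₁ : ℕ) (Bc Amax : ℝ), 1 ≤ Bc → 0 < Amax →
      (∀ t, t₀ < t → t + 1 < t₁ → (1 + ε / (Real.log m / ε)) * y t ≤ y (t + 1)) →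
      ε / (Bc * Amax) ≤ y (t₀ + 1) →
      t₀ + 1 < t₁ →
      y (t₁ - 1) ≤ (Real.log m / ε) / Amax →
      (t₁ : ℝ) - t₀ ≤
        2 * (Real.log m / ε ^ 2) * Real.log ((Real.log m / ε) * Bc / ε) + 2) := by
  have hm1 : (1:ℝ) < m := by exact_mod_cast lt_of_lt_of_le one_lt_two hm
  have hlogm : 0 < Real.log m := Real.log_pos hm1
  set η : ℝ := Real.log m / ε with hη
  have hηpos : 0 < η := div_pos hlogm hε
  constructor
  · rintro x g δ hx hg hgδ ⟨i, hgi⟩ hxlt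
    have hAg : A.mulVec g i ≤ δ * A.mulVec x i := by
      simp only [Matrix.mulVec, dotProduct, Finset.mul_sum]
      apply Finset.sum_le_sum
      intro j _
      calc A i j * g j ≤ A i j * (δ * x j) :=
            mul_le_mul_of_nonneg_left (hgδ j) (hA i j)
        _ = δ * (A i j * x j) := by ring
    have hAx0 : 0 ≤ A.mulVec x i := by
      simp only [Matrix.mulVec, dotProduct]
      apply Finset.sum_nonneg
      intro j _
      exact mul_nonneg (hA i j) (hx j)
    rw [hgi] at hAg
    have hδpos : 0 < δ := by
      by_contra h
      push_neg at h
      nlinarith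
    have : ε < δ * η := lt_of_le_of_lt hAg (by
      exact mul_lt_mul_of_pos_left (hxlt i) hδpos)
    rw [div_lt_iff₀ hηpos]
    linarith [this]
  · intro y t₀ t₁ Bc Amax hBc hAmax hgrow hinit hlt hfinal
    set r : ℝ := ε / η with hr
    have hrpos : 0 < r := div_pos hε hηpos
    have hr1 : r ≤ 1 := by
      rw [hr, hη, div_div_eq_mul_div, div_le_one hlogm]
      have hlog2 : Real.log 2 ≤ Real.log m := by
        apply Real.log_le_log (by norm_num)
        exact_mod_cast hm
      nlinarith [Real.log_two_gt_d9]
    -- induction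
    have key : ∀ k, t₀ + 2 + k ≤ t₁ → (1 + r) ^ k * y (t₀ + 1) ≤ y (t₀ + 1 + k) := by
      intro k
      induction k with
      | zero => intro _; simp
      | succ k ih =>
        intro hk
        have hk' : t₀ + 2 + k ≤ t₁ := by omega
        have ih' := ih hk'
        have hstep := hgrow (t₀ + 1 + k) (by omega) (by omega)
        have h1r : (0:ℝ) < 1 + r := by linarith
        calc (1 + r) ^ (k + 1) * y (t₀ + 1)
            = (1 + r) * ((1 + r) ^ k * y (t₀ + 1)) := by ring
          _ ≤ (1 + r) * y (t₀ + 1 + k) := by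
              exact mul_le_mul_of_nonneg_left ih' (le_of_lt h1r)
          _ ≤ y (t₀ + 1 + k + 1) := hstep
          _ = y (t₀ + 1 + (k + 1)) := by ring_nf
    set n : ℕ := t₁ - t₀ - 2 with hn
    have hne : t₀ + 2 + n = t₁ := by omega
    have hkey := key n (le_of_eq hne)
    have heq : t₀ + 1 + n = t₁ - 1 := by omega
    rw [heq] at hkey
    have hc : (1 + r) ^ n * (ε / (Bc * Amax)) ≤ η / Amax := by
      calc (1 + r) ^ n * (ε / (Bc * Amax)) ≤ (1 + r) ^ n * y (t₀ + 1) := by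
            apply mul_le_mul_of_nonneg_left hinit
            positivity
        _ ≤ y (t₁ - 1) := hkey
        _ ≤ η / Amax := hfinal
    have hpow : (1 + r) ^ n ≤ η * Bc / ε := by
      have h1 : (1 + r) ^ n ≤ (η / Amax) / (ε / (Bc * Amax)) := by
        rw [le_div_iff₀ (by positivity)]
        linarith
      refine h1.trans_eq ?_
      field_simp
    have hlogpow : (n : ℝ) * (r / 2) ≤ Real.log (η * Bc / ε) := by
      have h1 : (n : ℝ) * Real.log (1 + r) ≤ Real.log (η * Bc / ε) := by
        rw [← Real.log_pow]
        apply Real.log_le_log (by positivity) hpow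
      calc (n : ℝ) * (r / 2) ≤ (n : ℝ) * Real.log (1 + r) := by
            apply mul_le_mul_of_nonneg_left (half_le_log_one_add (le_of_lt hrpos) hr1)
            positivity
        _ ≤ _ := h1
    have hnle : (n : ℝ) ≤ 2 * (Real.log m / ε ^ 2) * Real.log (η * Bc / ε) := by
      have h2r : 2 * (Real.log m / ε ^ 2) = 2 / r := by
        rw [hr, hη]
        field_simp
      rw [h2r]
      rw [div_mul_eq_mul_div, le_div_iff₀ hrpos]
      linarith
    have hcast : (t₁ : ℝ) - t₀ = (n : ℝ) + 2 := by
      have h := congrArg (fun k : ℕ => (k : ℝ)) hne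
      push_cast at h
      linarith
    have hnle' : (n : ℝ) ≤
        2 * (Real.log m / ε ^ 2) * Real.log ((Real.log m / ε) * Bc / ε) := hnle
    rw [hcast]
    linarith
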